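/- Blow-up correctness for disjunction of multicolored independent set instances: Let G₁ be a graph colored with colors c_1,...,c_p and G₂ a graph colored with d_1,...,d_q. Form G' as follows: replace each vertex u of G₁ of color c_i by q vertices with distinct colors e_{i,1},...,e_{i,q}, replace each vertex v of G₂ of color d_j by p vertices with colors e_{1,j},...,e_{p,j}, and for every edge of G₁ or G₂ put a complete bipartite graph between the corresponding blow-up sets. Then G' has a multicolored independent set of size p·q (one vertex of each color e_{i,j}) if and only if G₁ has a multicolored independent set of size p or G₂ has a multicolored independent set of size q. -/

import Mathlib

/-- Blow-up correctness for the disjunction of two Multicolored Independent Set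
instances.  `G₁` is colored by `Fin p`, `G₂` by `Fin q`.  In the blown-up graph
`G'`, each vertex `u` of `G₁` of color `i` is replaced by `q` copies with colors
`(i, 1), ..., (i, q)`, each vertex `v` of `G₂` of color `j` by `p` copies with
colors `(1, j), ..., (p, j)`, and every edge of `G₁` or `G₂` becomes a complete
bipartite graph between the blow-up sets.  Then `G'` has a multicolored
independent set with one vertex of each of the `p·q` colors iff `G₁` has a
multicolored independent set of size `p` or `G₂` has one of size `q`. -/
theorem blowup_disjunction_correct {V₁ V₂ : Type*} [Fintype V₁] [Fintype V₂]
    (p q : ℕ) (G₁ : SimpleGraph V₁) (G₂ : SimpleGraph V₂)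
    (col₁ : V₁ → Fin p) (col₂ : V₂ → Fin q)
    (G' : SimpleGraph ((V₁ × Fin q) ⊕ (V₂ × Fin p)))
    (hG' : G' = SimpleGraph.fromRel (fun x y =>
      (∃ u u' : V₁, ∃ j j' : Fin q,
        x = Sum.inl (u, j) ∧ y = Sum.inl (u', j') ∧ G₁.Adj u u') ∨
      (∃ v v' : V₂, ∃ i i' : Fin p,
        x = Sum.inr (v, i) ∧ y = Sum.inr (v', i') ∧ G₂.Adj v v')))
    (color : (V₁ × Fin q) ⊕ (V₂ × Fin p) → Fin p × Fin q)
    (hcolor : ∀ x, color x = Sum.elim (fun uj => (col₁ uj.1, uj.2))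
      (fun vi => (vi.2, col₂ vi.1)) x) :
    (∃ f : Fin p × Fin q → (V₁ × Fin q) ⊕ (V₂ × Fin p),
      (∀ ij, color (f ij) = ij) ∧
      ∀ ij ij', ij ≠ ij' → ¬ G'.Adj (f ij) (f ij')) ↔
    ((∃ g : Fin p → V₁, (∀ i, col₁ (g i) = i) ∧
        ∀ i i', i ≠ i' → ¬ G₁.Adj (g i) (g i')) ∨
     (∃ h : Fin q → V₂, (∀ j, col₂ (h j) = j) ∧
        ∀ j j', j ≠ j' → ¬ G₂.Adj (h j) (h j'))) := by
  subst hG'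
  constructor
  · rintro ⟨f, hf, hind⟩
    by_cases hc : ∃ i₀ : Fin p, ∀ j : Fin q, ∃ v i, f (i₀, j) = Sum.inr (v, i)
    · obtain ⟨i₀, hi₀⟩ := hc
      choose v i hvi using hi₀
      right
      refine ⟨v, ?_, ?_⟩
      · intro j
        have := hf (i₀, j)
        rw [hcolor, hvi j] at this
        simpa using congrArg Prod.snd this
      · intro j j' hjj hadj
        have hne : v j ≠ v j' := by
          intro h
          apply hjj
          have h1 := hf (i₀, j); have h2 := hf (i₀, j')
          rw [hcolor, hvi j] at h1; rw [hcolor, hvi j'] at h2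
          have := congrArg Prod.snd h1
          have := congrArg Prod.snd h2
          simp_all
        apply hind (i₀, j) (i₀, j') (by simp [hjj])
        rw [hvi j, hvi j', SimpleGraph.fromRel_adj]
        exact ⟨by simp [hne], Or.inl (Or.inr ⟨v j, v j', i j, i j', rfl, rfl, hadj⟩)⟩
    · left
      push_neg at hc
      have hc' : ∀ i : Fin p, ∃ j : Fin q, ∃ u k, f (i, j) = Sum.inl (u, k) := by
        intro i
        obtain ⟨j, hj⟩ := hc i
        refine ⟨j, ?_⟩
        cases hfij : f (i, j) with
        | inl a =>
          obtain ⟨u0, k0⟩ := a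
          exact ⟨u0, k0, rfl⟩
        | inr b =>
          obtain ⟨v0, i0⟩ := b
          exact (hj v0 i0 hfij).elim
      choose j u k hu using hc'
      refine ⟨u, ?_, ?_⟩
      · intro i
        have := hf (i, j i)
        rw [hcolor, hu i] at this
        simpa using congrArg Prod.fst this
      · intro i i' hii hadj
        have hne : u i ≠ u i' := fun h => G₁.loopless.irrefl _ (h ▸ hadj)
        apply hind (i, j i) (i', j i') (by simp [hii])
        rw [hu i, hu i', SimpleGraph.fromRel_adj]
        exact ⟨by simp [hne], Or.inl (Or.inl ⟨u i, u i', k i, k i', rfl, rfl, hadj⟩)⟩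
  · rintro (⟨g, hg, hind⟩ | ⟨h, hh, hind⟩)
    · refine ⟨fun ij => Sum.inl (g ij.1, ij.2), fun ij => by rw [hcolor]; simp [hg], ?_⟩
      rintro ⟨i, j⟩ ⟨i', j'⟩ hne hadj
      rw [SimpleGraph.fromRel_adj] at hadj
      obtain ⟨hxy, hrel⟩ := hadj
      have key : G₁.Adj (g i) (g i') ∨ G₁.Adj (g i') (g i) := by
        rcases hrel with (⟨a, a', b, b', h1, h2, ha⟩ | ⟨v, v', c, c', h1, h2, ha⟩) |
          (⟨a, a', b, b', h1, h2, ha⟩ | ⟨v, v', c, c', h1, h2, ha⟩)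
        · left
          simp only [Sum.inl.injEq, Prod.mk.injEq] at h1 h2
          rw [h1.1, h2.1]; exact ha
        · simp at h1
        · right
          simp only [Sum.inl.injEq, Prod.mk.injEq] at h1 h2
          rw [h1.1, h2.1]; exact ha
        · simp at h1
      rcases eq_or_ne i i' with rfl | hii
      · rcases key with ha | ha <;> exact G₁.loopless.irrefl _ ha
      · rcases key with ha | ha
        · exact hind i i' hii ha
        · exact hind i' i hii.symm ha
    · refine ⟨fun ij => Sum.inr (h ij.2, ij.1), fun ij => by rw [hcolor]; simp [hh], ?_⟩
      rintro ⟨i, j⟩ ⟨i', j'⟩ hne hadj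
      rw [SimpleGraph.fromRel_adj] at hadj
      obtain ⟨hxy, hrel⟩ := hadj
      have key : G₂.Adj (h j) (h j') ∨ G₂.Adj (h j') (h j) := by
        rcases hrel with (⟨a, a', b, b', h1, h2, ha⟩ | ⟨v, v', c, c', h1, h2, ha⟩) |
          (⟨a, a', b, b', h1, h2, ha⟩ | ⟨v, v', c, c', h1, h2, ha⟩)
        · simp at h1
        · left
          simp only [Sum.inr.injEq, Prod.mk.injEq] at h1 h2
          rw [h1.1, h2.1]; exact ha
        · simp at h1
        · right
          simp only [Sum.inr.injEq, Prod.mk.injEq] at h1 h2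
          rw [h1.1, h2.1]; exact ha
      rcases eq_or_ne j j' with rfl | hjj
      · rcases key with ha | ha <;> exact G₂.loopless.irrefl _ ha
      · rcases key with ha | ha
        · exact hind j j' hjj ha
        · exact hind j' j hjj.symm ha
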